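/- Let $S_1, \dots, S_{k+1}$ be compact convex sets in $\mathbb{R}^d$ ($1 \leq k \leq d-1$) and let $\vec{r} = \{a e_d : a \geq 0\}$ be the nonnegative $d$-th coordinate ray. Suppose that no $k$-flat intersecting all of $S_1, \dots, S_{k+1}$ contains a straight line parallel to $\vec{r}$. Then there exists $n' \in \mathbb{N}$ such that the region $Q(\vec{r}, n') = \mathrm{cone}(\vec{r}, 1/n') \setminus B(0, n')$ is disjoint from the union of all $k$-flats intersecting all of $S_1, \dots, S_{k+1}$. -/

import Mathlib

open RealInnerProductSpace Filter Metric Topology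

/-- A `k`-flat in `ℝ^d`: a (nonempty) affine subspace of dimension `k`. -/
def IsKFlat {d : ℕ} (k : ℕ) (F : Set (EuclideanSpace ℝ (Fin d))) : Prop :=
  ∃ A : AffineSubspace ℝ (EuclideanSpace ℝ (Fin d)),
    (A : Set (EuclideanSpace ℝ (Fin d))).Nonempty ∧
    Module.finrank ℝ A.direction = k ∧ F = ↑A

/-- A collection `T` of `k`-flats pierces the family `𝓕`. -/
def PiercedByFlats {d : ℕ} (k : ℕ) (T 𝓕 : Set (Set (EuclideanSpace ℝ (Fin d)))) : Prop :=
  (∀ f ∈ T, IsKFlat k f) ∧ ∀ B ∈ 𝓕, ∃ f ∈ T, (B ∩ f).Nonempty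

/-- The family `𝓕` is pierceable by finitely many `k`-flats. -/
def FinFlatPierceable {d : ℕ} (k : ℕ) (𝓕 : Set (Set (EuclideanSpace ℝ (Fin d)))) : Prop :=
  ∃ T : Set (Set (EuclideanSpace ℝ (Fin d))), T.Finite ∧ PiercedByFlats k T 𝓕

/-- The family `𝓕` is pierceable by finitely many points. -/
def FinPointPierceable {d : ℕ} (𝓕 : Set (Set (EuclideanSpace ℝ (Fin d)))) : Prop :=
  ∃ P : Set (EuclideanSpace ℝ (Fin d)), P.Finite ∧ ∀ B ∈ 𝓕, ∃ p ∈ P, p ∈ B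

/-- The ray from the origin in direction `v`. -/
def rayOf {d : ℕ} (v : EuclideanSpace ℝ (Fin d)) : Set (EuclideanSpace ℝ (Fin d)) :=
  {x | ∃ a : ℝ, 0 ≤ a ∧ x = a • v}

/-- The convex circular cone about the ray in direction `v` with aperture `1/n`:
points whose distance to the ray is at most `‖x‖ / n`. -/
def coneOf {d : ℕ} (v : EuclideanSpace ℝ (Fin d)) (n : ℕ) :
    Set (EuclideanSpace ℝ (Fin d)) :=
  {x | Metric.infDist x (rayOf v) ≤ ‖x‖ / n}

/-- `Q(r⃗, n)`: the cone of aperture `1/n` about the ray with the closed ball of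
radius `n` about the origin removed. -/
def Qreg {d : ℕ} (v : EuclideanSpace ℝ (Fin d)) (n : ℕ) :
    Set (EuclideanSpace ℝ (Fin d)) :=
  coneOf v n \ Metric.closedBall 0 n

/-- The `d`-th standard basis direction of `ℝ^d` (index `d-1`). -/
noncomputable def eLast (d : ℕ) : EuclideanSpace ℝ (Fin d) :=
  WithLp.toLp 2 (fun i => if (i : ℕ) = d - 1 then 1 else 0)

lemma helper1 {E : Type*} [NormedAddCommGroup E] [InnerProductSpace ℝ E] {k : ℕ}
    {b : Fin k → E} (hb : Orthonormal ℝ b) {v : E}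
    (hv : v ∈ Submodule.span ℝ (Set.range b)) :
    ∑ j, ⟪b j, v⟫ • b j = v := by
  obtain ⟨c, rfl⟩ := (Submodule.mem_span_range_iff_exists_fun ℝ).mp hv
  simp [hb.inner_right_fintype]

lemma helper2 {E : Type*} [NormedAddCommGroup E] [InnerProductSpace ℝ E]
    [FiniteDimensional ℝ E] {k : ℕ} (V : Submodule ℝ E)
    (h : Module.finrank ℝ V = k) :
    ∃ b : Fin k → E, Orthonormal ℝ b ∧ Submodule.span ℝ (Set.range b) = V := by
  let o := stdOrthonormalBasis ℝ V
  let b : Fin k → E := fun j => (o ((Fin.cast h.symm) j) : E)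
  refine ⟨b, ?_, ?_⟩
  · have ho : Orthonormal ℝ (fun j => (o j : E)) := by
      have := o.orthonormal
      rw [orthonormal_iff_ite] at this ⊢
      intro i j
      simpa [Submodule.coe_inner] using this i j
    exact ho.comp _ (Fin.cast_injective h.symm)
  · have h1 : Set.range b = ⇑V.subtype '' Set.range o := by
      ext x; constructor
      · rintro ⟨j, rfl⟩; exact ⟨o (Fin.cast h.symm j), ⟨_, rfl⟩, rfl⟩
      · rintro ⟨y, ⟨j, rfl⟩, rfl⟩; exact ⟨Fin.cast h j, by simp [b]⟩
    rw [h1, Submodule.span_image,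
      show Set.range ⇑o = Set.range ⇑o.toBasis by rw [o.coe_toBasis],
      o.toBasis.span_eq, Submodule.map_top, Submodule.range_subtype]


set_option maxHeartbeats 1000000 in
theorem stmt16 (d k : ℕ) (hk1 : 1 ≤ k) (hk2 : k ≤ d - 1)
    (S : Fin (k + 1) → Set (EuclideanSpace ℝ (Fin d)))
    (hcomp : ∀ i, IsCompact (S i)) (hconv : ∀ i, Convex ℝ (S i))
    (hnoline : ∀ f : Set (EuclideanSpace ℝ (Fin d)), IsKFlat k f →
      (∀ i, (f ∩ S i).Nonempty) →
      ¬ ∃ p : EuclideanSpace ℝ (Fin d), ∀ t : ℝ, p + t • eLast d ∈ f) :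
    ∃ n' : ℕ, 0 < n' ∧
      ∀ f : Set (EuclideanSpace ℝ (Fin d)), IsKFlat k f →
        (∀ i, (f ∩ S i).Nonempty) → Qreg (eLast d) n' ∩ f = ∅ := by
  classical
  have hd2 : 2 ≤ d := by omega
  have hlt : d - 1 < d := by omega
  set e : EuclideanSpace ℝ (Fin d) := eLast d with he_def
  have hee : e = EuclideanSpace.single (⟨d-1, hlt⟩ : Fin d) (1:ℝ) := by
    ext i
    simp only [he_def, eLast, PiLp.toLp_apply, EuclideanSpace.single_apply, Fin.ext_iff]
  have hnorm_e : ‖e‖ = 1 := by rw [hee, EuclideanSpace.norm_single]; norm_num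
  -- bound on S 0
  obtain ⟨M₀, hM₀⟩ := (hcomp 0).isBounded.subset_closedBall 0
  set M : ℝ := max M₀ 0 with hM_def
  have hM0 : 0 ≤ M := le_max_right _ _
  have hMS : ∀ y ∈ S 0, ‖y‖ ≤ M := fun y hy => by
    have := hM₀ hy
    rw [Metric.mem_closedBall, dist_zero_right] at this
    exact le_trans this (le_max_left _ _)
  by_contra hcon
  push_neg at hcon
  set N : ℕ → ℕ := fun n => n + 1 + ⌈M⌉₊ with hN_def
  have hNpos : ∀ n, 0 < N n := fun n => by simp [hN_def]
  have h' := fun n => hcon (N n) (hNpos n)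
  choose f hflat hmeets hnonemp using h'
  choose A hAne hAdim hAf using hflat
  choose q hq using fun n i => hmeets n i
  choose x hx using hnonemp
  -- memberships in the affine subspace
  have hqA : ∀ n i, q n i ∈ A n := fun n i => by
    have := (hq n i).1; rwa [hAf n] at this
  have hqS : ∀ n i, q n i ∈ S i := fun n i => (hq n i).2
  have hxA : ∀ n, x n ∈ A n := fun n => by
    have := (hx n).2; rwa [hAf n] at this
  have hxQ : ∀ n, x n ∈ Qreg e (N n) := fun n => (hx n).1
  have hxnorm : ∀ n, (N n : ℝ) < ‖x n‖ := fun n => by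
    have := (hxQ n).2
    simp only [Metric.mem_closedBall, dist_zero_right, not_le] at this
    exact this
  have hxcone : ∀ n, Metric.infDist (x n) (rayOf e) ≤ ‖x n‖ / N n := fun n => (hxQ n).1
  -- orthonormal spanning families
  choose b hb hbspan using fun n => helper2 (A n).direction (hAdim n)
  -- key norms
  have hNM : ∀ n, M + (n + 1) ≤ (N n : ℝ) := fun n => by
    have : M ≤ (⌈M⌉₊ : ℝ) := Nat.le_ceil M
    simp only [hN_def]
    push_cast
    linarith
  have hr_pos : ∀ n : ℕ, (n : ℝ) + 1 < ‖x n - q n 0‖ := fun n => by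
    have h1 := hxnorm n
    have h2 := hMS _ (hqS n 0)
    have h3 := hNM n
    have := norm_sub_norm_le (x n) (q n 0)
    linarith
  -- the unit vector towards x n
  set u : ℕ → EuclideanSpace ℝ (Fin d) := fun n => ‖x n - q n 0‖⁻¹ • (x n - q n 0) with hu_def
  have hu_mem : ∀ n, u n ∈ Submodule.span ℝ (Set.range (b n)) := fun n => by
    rw [hbspan n]
    exact Submodule.smul_mem _ _ (by
      have := AffineSubspace.vsub_mem_direction (hxA n) (hqA n 0)
      rwa [vsub_eq_sub] at this)
  have hur : ∀ n, ∑ j, ⟪b n j, u n⟫ • b n j = u n := fun n =>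
    helper1 (hb n) (hu_mem n)
  -- q n i - q n 0 in span
  have hq_mem : ∀ n i, q n i - q n 0 ∈ Submodule.span ℝ (Set.range (b n)) := fun n i => by
    rw [hbspan n]
    have := AffineSubspace.vsub_mem_direction (hqA n i) (hqA n 0)
    rwa [vsub_eq_sub] at this
  have hqr : ∀ n i, ∑ j, ⟪b n j, q n i - q n 0⟫ • b n j = q n i - q n 0 := fun n i =>
    helper1 (hb n) (hq_mem n i)
  -- u tends to e
  have hu_tendsto : Tendsto u atTop (𝓝 e) := by
    rw [tendsto_iff_norm_sub_tendsto_zero]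
    apply squeeze_zero (fun n => norm_nonneg _) (g := fun n : ℕ => (8 + 2*M)/((n:ℝ)+1))
    · intro n
      have ht : (N n : ℝ) < ‖x n‖ := hxnorm n
      have hrn : (n:ℝ)+1 < ‖x n - q n 0‖ := hr_pos n
      have hn1 : (0:ℝ) < (n:ℝ)+1 := by positivity
      have hr0 : (0:ℝ) < ‖x n - q n 0‖ := lt_trans hn1 hrn
      have hqM : ‖q n 0‖ ≤ M := hMS _ (hqS n 0)
      have hs : (0:ℝ) < (N n : ℝ) := by exact_mod_cast hNpos n
      have ht0 : (0:ℝ) < ‖x n‖ := lt_trans hs ht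
      have hNn := hNM n
      have hx1 := hxcone n
      set t := ‖x n‖ with ht_def
      set r := ‖x n - q n 0‖ with hr_def
      set s := ((N n : ℕ) : ℝ) with hs_def
      clear_value t r s
      have hlt2 : Metric.infDist (x n) (rayOf e) < 2*(t/s) :=
        lt_of_le_of_lt hx1 (by
          have : 0 < t/s := div_pos ht0 hs
          linarith)
      have hray : (rayOf e).Nonempty := ⟨0, ⟨0, le_refl 0, by simp⟩⟩
      obtain ⟨y, hy, hdist⟩ := (Metric.infDist_lt_iff hray).mp hlt2
      obtain ⟨a, ha0, rfl⟩ := hy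
      rw [dist_eq_norm] at hdist
      -- step A
      have hue : ‖u n - e‖ = r⁻¹ * ‖(x n - q n 0) - r • e‖ := by
        have h1 : u n - e = r⁻¹ • ((x n - q n 0) - r • e) := by
          rw [smul_sub, smul_smul, inv_mul_cancel₀ hr0.ne', one_smul]
          simp only [hu_def]
          rw [← hr_def]
        rw [h1, norm_smul, norm_inv, Real.norm_eq_abs, abs_of_pos hr0]
      -- step B
      have har : |a - r| ≤ 2*(t/s) + M := by
        have h1 : |a - r| = |‖a • e‖ - ‖x n - q n 0‖| := by
          rw [norm_smul, Real.norm_eq_abs, abs_of_nonneg ha0, hnorm_e, mul_one, hr_def]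
        have h2 : |‖a • e‖ - ‖x n - q n 0‖| ≤ ‖a • e - (x n - q n 0)‖ :=
          abs_norm_sub_norm_le _ _
        have h3 : a • e - (x n - q n 0) = (a • e - x n) + q n 0 := by abel
        have h4 : ‖(a • e - x n) + q n 0‖ ≤ ‖a • e - x n‖ + ‖q n 0‖ := norm_add_le _ _
        have h5 : ‖a • e - x n‖ = ‖x n - a • e‖ := norm_sub_rev _ _
        rw [h1]
        calc |‖a • e‖ - ‖x n - q n 0‖| ≤ ‖a • e - (x n - q n 0)‖ := h2
          _ ≤ ‖x n - a • e‖ + ‖q n 0‖ := by rw [h3]; rw [← h5] at *; linarith [norm_add_le (a • e - x n) (q n 0)]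
          _ ≤ 2*(t/s) + M := by linarith [le_of_lt hdist]
      have hB : ‖(x n - q n 0) - r • e‖ ≤ 4*(t/s) + 2*M := by
        have h3 : (x n - q n 0) - r • e = ((x n - a • e) - q n 0) + (a - r) • e := by
          rw [sub_smul]; abel
        calc ‖(x n - q n 0) - r • e‖
            ≤ ‖(x n - a • e) - q n 0‖ + ‖(a - r) • e‖ := by rw [h3]; exact norm_add_le _ _
          _ ≤ (‖x n - a • e‖ + ‖q n 0‖) + |a - r| := by
              rw [norm_smul, Real.norm_eq_abs, hnorm_e, mul_one]
              exact add_le_add_left (norm_sub_le _ _) _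
          _ ≤ 4*(t/s) + 2*M := by linarith [le_of_lt hdist]
      -- step C
      have hMs : M < s := by linarith
      have hrs : t - M ≤ r := by
        have := norm_sub_norm_le (x n) (q n 0)
        rw [← ht_def, ← hr_def] at this
        linarith
      have hns : (n:ℝ)+1 ≤ s := by linarith
      have hts : t*((n:ℝ)+1) ≤ 2*(r*s) := by
        rcases le_or_gt t (2*s) with h|h
        · nlinarith [mul_le_mul_of_nonneg_right h hn1.le, mul_lt_mul_of_pos_left hrn hs]
        · nlinarith [mul_le_mul_of_nonneg_left hns ht0.le, mul_le_mul_of_nonneg_right hrs hs.le,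
            mul_lt_mul_of_pos_right h hs, mul_lt_mul_of_pos_right hMs hs]
      have hC : r⁻¹ * (4*(t/s) + 2*M) ≤ (8+2*M)/((n:ℝ)+1) := by
        rw [inv_mul_eq_div, div_le_div_iff₀ hr0 hn1]
        have h4 : (t/s)*((n:ℝ)+1) ≤ 2*r := by
          rw [div_mul_eq_mul_div, div_le_iff₀ hs]
          linarith [hts]
        nlinarith [h4, mul_le_mul_of_nonneg_left hrn.le hM0]
      calc ‖u n - e‖ = r⁻¹ * ‖(x n - q n 0) - r • e‖ := hue
        _ ≤ r⁻¹ * (4*(t/s) + 2*M) := by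
            apply mul_le_mul_of_nonneg_left hB (by positivity)
        _ ≤ (8+2*M)/((n:ℝ)+1) := hC
    · have h0 := (tendsto_const_div_atTop_nhds_zero_nat (8+2*M)).comp (tendsto_add_atTop_nat 1)
      refine h0.congr fun m => ?_
      simp only [Function.comp_apply]
      push_cast
      ring
  -- compact extraction
  have hKc : IsCompact ((Set.univ.pi S) ×ˢ (Set.univ.pi fun _ : Fin k => Metric.sphere (0:EuclideanSpace ℝ (Fin d)) 1)) :=
    (isCompact_univ_pi hcomp).prod (isCompact_univ_pi fun _ => isCompact_sphere 0 1)
  have hzK : ∀ n, ((q n, b n) : (Fin (k+1) → EuclideanSpace ℝ (Fin d)) × (Fin k → EuclideanSpace ℝ (Fin d))) ∈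
      (Set.univ.pi S) ×ˢ (Set.univ.pi fun _ : Fin k => Metric.sphere (0:EuclideanSpace ℝ (Fin d)) 1) := fun n => by
    constructor
    · intro i _; exact hqS n i
    · intro j _
      simp only [Metric.mem_sphere, dist_zero_right]
      exact (hb n).1 j
  obtain ⟨⟨p, c⟩, hpcK, φ, hφ, hφt⟩ := hKc.tendsto_subseq hzK
  have hp_t : ∀ i, Tendsto (fun n => q (φ n) i) atTop (𝓝 (p i)) := fun i =>
    (Continuous.tendsto ((continuous_apply i).comp continuous_fst) _).comp hφt
  have hb_t : ∀ j, Tendsto (fun n => b (φ n) j) atTop (𝓝 (c j)) := fun j =>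
    (Continuous.tendsto ((continuous_apply j).comp continuous_snd) _).comp hφt
  have hpS : ∀ i, p i ∈ S i := fun i => hpcK.1 i (Set.mem_univ i)
  have hu_t : Tendsto (fun n => u (φ n)) atTop (𝓝 e) := hu_tendsto.comp hφ.tendsto_atTop
  -- orthonormality of c
  have hc : Orthonormal ℝ c := by
    rw [orthonormal_iff_ite]
    intro i j
    have h1 : Tendsto (fun n => ⟪b (φ n) i, b (φ n) j⟫) atTop (𝓝 ⟪c i, c j⟫) :=
      (hb_t i).inner (hb_t j)
    have h2 : (fun n => ⟪b (φ n) i, b (φ n) j⟫) = fun _ => if i = j then (1:ℝ) else 0 :=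
      funext fun n => orthonormal_iff_ite.mp (hb (φ n)) i j
    rw [h2] at h1
    exact tendsto_nhds_unique h1 tendsto_const_nhds
  -- e is in span of c
  have hce : ∑ j, ⟪c j, e⟫ • c j = e := by
    have h1 : Tendsto (fun n => ∑ j, ⟪b (φ n) j, u (φ n)⟫ • b (φ n) j) atTop
        (𝓝 (∑ j, ⟪c j, e⟫ • c j)) :=
      tendsto_finset_sum _ fun j _ => ((hb_t j).inner hu_t).smul (hb_t j)
    have h2 : (fun n => ∑ j, ⟪b (φ n) j, u (φ n)⟫ • b (φ n) j) = fun n => u (φ n) :=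
      funext fun n => hur (φ n)
    rw [h2] at h1
    exact tendsto_nhds_unique h1 hu_t
  have hpe : ∀ i, ∑ j, ⟪c j, p i - p 0⟫ • c j = p i - p 0 := fun i => by
    have h1 : Tendsto (fun n => ∑ j, ⟪b (φ n) j, q (φ n) i - q (φ n) 0⟫ • b (φ n) j) atTop
        (𝓝 (∑ j, ⟪c j, p i - p 0⟫ • c j)) :=
      tendsto_finset_sum _ fun j _ =>
        ((hb_t j).inner ((hp_t i).sub (hp_t 0))).smul (hb_t j)
    have h2 : (fun n => ∑ j, ⟪b (φ n) j, q (φ n) i - q (φ n) 0⟫ • b (φ n) j)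
        = fun n => q (φ n) i - q (φ n) 0 :=
      funext fun n => hqr (φ n) i
    rw [h2] at h1
    exact tendsto_nhds_unique h1 ((hp_t i).sub (hp_t 0))
  -- build the limit flat and contradict
  set V : Submodule ℝ (EuclideanSpace ℝ (Fin d)) := Submodule.span ℝ (Set.range c) with hV_def
  have heV : e ∈ V := by
    rw [← hce]
    exact Submodule.sum_mem _ fun j _ =>
      Submodule.smul_mem _ _ (Submodule.subset_span ⟨j, rfl⟩)
  set A' : AffineSubspace ℝ (EuclideanSpace ℝ (Fin d)) := AffineSubspace.mk' (p 0) V with hA'_def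
  have hflat' : IsKFlat k (↑A' : Set (EuclideanSpace ℝ (Fin d))) := by
    refine ⟨A', ⟨p 0, AffineSubspace.self_mem_mk' _ _⟩, ?_, rfl⟩
    rw [hA'_def, AffineSubspace.direction_mk', hV_def,
      finrank_span_eq_card hc.linearIndependent]
    simp
  have hmeets' : ∀ i, ((↑A' : Set (EuclideanSpace ℝ (Fin d))) ∩ S i).Nonempty := fun i => by
    refine ⟨p i, ?_, hpS i⟩
    apply AffineSubspace.mem_mk'.mpr
    rw [vsub_eq_sub, ← hpe i]
    exact Submodule.sum_mem _ fun j _ =>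
      Submodule.smul_mem _ _ (Submodule.subset_span ⟨j, rfl⟩)
  refine hnoline (↑A') hflat' hmeets' ⟨p 0, fun t => ?_⟩
  apply AffineSubspace.mem_mk'.mpr
  rw [vsub_eq_sub, add_sub_cancel_left]
  exact Submodule.smul_mem _ _ heV
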